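/- Let α be a piecewise geodesic path with vertices a₀,…,a_k in which two consecutive segments [a_{i−1},a_i], [a_i,a_{i+1}] are both non-expressways; replacing them by the single geodesic [a_{i−1},a_{i+1}] does not increase modified length. Consequently, for any a, b the infimum λ(a,b) of modified lengths over all piecewise geodesic paths from a to b equals the infimum over admissible paths, and λ satisfies: λ(a,b) ≤ d(a,b), the triangle inequality λ(a,c) ≤ λ(a,b) + λ(b,c), and |λ(a,b) − λ(a',b')| ≤ d(a,a') + d(b,b'). -/

import Mathlib

def GeodSeg {X : Type*} [MetricSpace X] (s : Set X) (a b : X) : Prop :=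
  ∃ f : ℝ → X, f 0 = a ∧ f (dist a b) = b ∧
    (∀ u ∈ Set.Icc (0:ℝ) (dist a b), ∀ v ∈ Set.Icc (0:ℝ) (dist a b),
      dist (f u) (f v) = |u - v|) ∧
    s = f '' Set.Icc (0:ℝ) (dist a b)

def projSet {X : Type*} [MetricSpace X] (s : Set X) (x : X) : Set X :=
  {p | p ∈ s ∧ ∀ q ∈ s, dist x p ≤ dist x q}

def setProj {X : Type*} [MetricSpace X] (s K : Set X) : Set X :=
  ⋃ x ∈ K, projSet s x

def AxiomDD (X : Type*) [MetricSpace X] (C : ℝ) : Prop :=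
  ∀ (s : Set X) (a b : X), GeodSeg s a b →
    ∀ x x' p p' : X, p ∈ projSet s x → p' ∈ projSet s x' → dist p p' < dist x x' + C

def Contracting {X : Type*} [MetricSpace X] (B : ℝ) (s : Set X) : Prop :=
  ∀ (z : X) (r : ℝ), Metric.ball z r ∩ s = ∅ →
    Metric.diam (setProj s (Metric.ball z r)) < B

structure PGPath (X : Type*) [MetricSpace X] (a b : X) where
  k : ℕ
  v : ℕ → X
  seg : ℕ → Set X
  hv0 : v 0 = a
  hvk : v k = b
  hseg : ∀ i < k, GeodSeg (seg i) (v i) (v (i + 1))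

open scoped Classical in
noncomputable def mlen {X : Type*} [MetricSpace X] {a b : X}
    (E : Set (Set X)) (p : PGPath X a b) : ℝ :=
  (∑ i ∈ Finset.range p.k, dist (p.v i) (p.v (i + 1))) -
    (((Finset.range p.k).filter (fun i => p.seg i ∈ E)).card : ℝ)

def Admissible {X : Type*} [MetricSpace X] {a b : X}
    (E : Set (Set X)) (p : PGPath X a b) : Prop :=
  ∀ i : ℕ, i + 1 < p.k → p.seg i ∈ E ∨ p.seg (i + 1) ∈ E

noncomputable def lam {X : Type*} [MetricSpace X] (E : Set (Set X)) (a b : X) : ℝ :=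
  sInf {m : ℝ | ∃ p : PGPath X a b, Admissible E p ∧ mlen E p = m}

open scoped Classical

lemma geod_diam {X : Type*} [MetricSpace X] {s : Set X} {a b : X} (h : GeodSeg s a b) :
    Metric.diam s = dist a b := by
  obtain ⟨f, h0, hD, hiso, hs⟩ := h
  have hDnn : (0:ℝ) ≤ dist a b := dist_nonneg
  subst hs
  have hbd : ∀ x ∈ Set.range f |>.inter (Set.univ), True := fun _ _ => trivial
  have hbd : ∀ x ∈ f '' Set.Icc (0:ℝ) (dist a b), ∀ y ∈ f '' Set.Icc (0:ℝ) (dist a b), dist x y ≤ dist a b := by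
    rintro x ⟨u, hu, rfl⟩ y ⟨w, hw, rfl⟩
    rw [hiso u hu w hw]
    rw [abs_sub_le_iff]
    constructor <;> [linarith [hu.1, hu.2, hw.1, hw.2]; linarith [hu.1, hu.2, hw.1, hw.2]]
  apply le_antisymm
  · exact Metric.diam_le_of_forall_dist_le hDnn hbd
  · have ha : a ∈ f '' Set.Icc (0:ℝ) (dist a b) := ⟨0, ⟨le_refl _, hDnn⟩, h0⟩
    have hb : b ∈ f '' Set.Icc (0:ℝ) (dist a b) := ⟨dist a b, ⟨hDnn, le_refl _⟩, hD⟩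
    exact Metric.dist_le_diam_of_mem (Metric.isBounded_iff.2 ⟨dist a b, hbd⟩) ha hb

lemma mlen_eq_sum {X : Type*} [MetricSpace X] {a b : X} (E : Set (Set X)) (p : PGPath X a b) :
    mlen E p = ∑ i ∈ Finset.range p.k,
      (dist (p.v i) (p.v (i + 1)) - if p.seg i ∈ E then (1:ℝ) else 0) := by
  rw [Finset.sum_sub_distrib, Finset.sum_boole, mlen]

lemma term_nonneg {X : Type*} [MetricSpace X] {a b : X} {E : Set (Set X)}
    {L : ℝ} (hL : 1 ≤ L)
    (hE : ∀ s ∈ E, ∃ u v : X, GeodSeg s u v ∧ dist u v = L)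
    (p : PGPath X a b) {i : ℕ} (hi : i < p.k) :
    (0:ℝ) ≤ dist (p.v i) (p.v (i + 1)) - if p.seg i ∈ E then (1:ℝ) else 0 := by
  by_cases h : p.seg i ∈ E
  · obtain ⟨u, w, hg, hLuw⟩ := hE _ h
    have h1 := geod_diam hg
    have h2 := geod_diam (p.hseg i hi)
    rw [if_pos h]
    have : dist (p.v i) (p.v (i+1)) = L := by rw [← h2, h1, hLuw]
    linarith
  · rw [if_neg h]; simpa using dist_nonneg

lemma mlen_nonneg {X : Type*} [MetricSpace X] {a b : X} {E : Set (Set X)}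
    {L : ℝ} (hL : 1 ≤ L)
    (hE : ∀ s ∈ E, ∃ u v : X, GeodSeg s u v ∧ dist u v = L)
    (p : PGPath X a b) : (0:ℝ) ≤ mlen E p := by
  rw [mlen_eq_sum]
  exact Finset.sum_nonneg fun i hi => term_nonneg hL hE p (Finset.mem_range.1 hi)

lemma merge_lemma {X : Type*} [MetricSpace X]
    (hgeo : ∀ a b : X, ∃ s : Set X, GeodSeg s a b)
    (E : Set (Set X)) {a b : X} (p : PGPath X a b) (i : ℕ) (hi : i + 1 < p.k)
    (h1 : p.seg i ∉ E) (h2 : p.seg (i + 1) ∉ E) :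
    ∃ p' : PGPath X a b, p'.k + 1 = p.k ∧ mlen E p' ≤ mlen E p := by
  obtain ⟨s0, hs0⟩ := hgeo (p.v i) (p.v (i + 2))
  set m := p.k - (i + 2) with hm
  have hk : p.k = i + 2 + m := by omega
  refine ⟨⟨p.k - 1,
      fun j => if j ≤ i then p.v j else p.v (j + 1),
      fun j => if j < i then p.seg j else if j = i then s0 else p.seg (j + 1),
      ?_, ?_, ?_⟩, by show p.k - 1 + 1 = p.k; omega, ?_⟩
  · simp [p.hv0]
  · have h1' : ¬ (p.k - 1 ≤ i) := by omega
    have h2' : p.k - 1 + 1 = p.k := by omega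
    simp only [if_neg h1', h2', p.hvk]
  · intro j hj
    rcases lt_trichotomy j i with h | h | h
    · have e1 : j ≤ i := h.le
      have e2 : j + 1 ≤ i := h
      simp only [if_pos e1, if_pos e2, if_pos h]
      exact p.hseg j (by omega)
    · subst h
      simp only [if_pos (le_refl j), if_neg (lt_irrefl j), if_pos rfl,
        if_neg (by omega : ¬ (j + 1 ≤ j))]
      exact hs0
    · have e1 : ¬ (j ≤ i) := by omega
      have e2 : ¬ (j + 1 ≤ i) := by omega
      simp only [if_neg e1, if_neg e2, if_neg (by omega : ¬ (j < i)), if_neg (by omega : j ≠ i)]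
      exact p.hseg (j + 1) (by omega)
  · rw [mlen_eq_sum, mlen_eq_sum]
    dsimp only
    have hk1 : p.k - 1 = i + 1 + m := by omega
    rw [show Finset.range (p.k - 1) = Finset.range (i + 1 + m) by rw [hk1],
      show Finset.range p.k = Finset.range (i + 2 + m) by rw [hk]]
    have htail : ∀ t ∈ Finset.range m,
        (dist (if i + 1 + t ≤ i then p.v (i + 1 + t) else p.v (i + 1 + t + 1))
              (if i + 1 + t + 1 ≤ i then p.v (i + 1 + t + 1) else p.v (i + 1 + t + 1 + 1)) -
          if (if i + 1 + t < i then p.seg (i + 1 + t) else if i + 1 + t = i then s0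
              else p.seg (i + 1 + t + 1)) ∈ E then (1:ℝ) else 0)
        = (dist (p.v (i + 2 + t)) (p.v (i + 2 + t + 1)) -
            if p.seg (i + 2 + t) ∈ E then (1:ℝ) else 0) := by
      intro t _
      have e1 : ¬ (i + 1 + t ≤ i) := by omega
      have e2 : ¬ (i + 1 + t + 1 ≤ i) := by omega
      have e3 : ¬ (i + 1 + t < i) := by omega
      have e4 : i + 1 + t ≠ i := by omega
      have e5 : i + 1 + t + 1 = i + 2 + t := by omega
      have e6 : ¬ (i + 2 + t ≤ i) := by omega
      simp only [if_neg e1, if_neg e2, if_neg e3, if_neg e4, e5, if_neg e6]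
    have hhead : ∀ j ∈ Finset.range i,
        (dist (if j ≤ i then p.v j else p.v (j + 1))
              (if j + 1 ≤ i then p.v (j + 1) else p.v (j + 1 + 1)) -
          if (if j < i then p.seg j else if j = i then s0 else p.seg (j + 1)) ∈ E
            then (1:ℝ) else 0)
        = (dist (p.v j) (p.v (j + 1)) - if p.seg j ∈ E then (1:ℝ) else 0) := by
      intro j hj
      have hji := Finset.mem_range.1 hj
      simp only [if_pos hji.le, if_pos (Nat.succ_le_of_lt hji), if_pos hji]
    have L : (∑ j ∈ Finset.range (i + 1 + m),
        (dist (if j ≤ i then p.v j else p.v (j + 1))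
              (if j + 1 ≤ i then p.v (j + 1) else p.v (j + 1 + 1)) -
          if (if j < i then p.seg j else if j = i then s0 else p.seg (j + 1)) ∈ E
            then (1:ℝ) else 0))
        = (∑ j ∈ Finset.range i,
            (dist (p.v j) (p.v (j + 1)) - if p.seg j ∈ E then (1:ℝ) else 0))
          + (dist (p.v i) (p.v (i + 2)) - if s0 ∈ E then (1:ℝ) else 0)
          + ∑ t ∈ Finset.range m,
              (dist (p.v (i + 2 + t)) (p.v (i + 2 + t + 1)) -
                if p.seg (i + 2 + t) ∈ E then (1:ℝ) else 0) := by
      rw [Finset.sum_range_add, Finset.sum_range_succ]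
      congr 1
      · congr 1
        · exact Finset.sum_congr rfl hhead
        · have e1 : ¬ (i + 1 ≤ i) := by omega
          have e0 : i + 1 + 1 = i + 2 := rfl
          simp only [le_refl, if_true, if_neg e1, lt_irrefl, if_false, if_pos rfl, e0]
      · exact Finset.sum_congr rfl htail
    have R : (∑ j ∈ Finset.range (i + 2 + m),
        (dist (p.v j) (p.v (j + 1)) - if p.seg j ∈ E then (1:ℝ) else 0))
        = (∑ j ∈ Finset.range i,
            (dist (p.v j) (p.v (j + 1)) - if p.seg j ∈ E then (1:ℝ) else 0))
          + (dist (p.v i) (p.v (i + 1)) - if p.seg i ∈ E then (1:ℝ) else 0)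
          + (dist (p.v (i + 1)) (p.v (i + 1 + 1)) - if p.seg (i + 1) ∈ E then (1:ℝ) else 0)
          + ∑ t ∈ Finset.range m,
              (dist (p.v (i + 2 + t)) (p.v (i + 2 + t + 1)) -
                if p.seg (i + 2 + t) ∈ E then (1:ℝ) else 0) := by
      rw [Finset.sum_range_add, Finset.sum_range_succ, Finset.sum_range_succ]
    rw [L, R]
    have hv12 : p.v (i + 1 + 1) = p.v (i + 2) := rfl
    have key : (dist (p.v i) (p.v (i + 2)) - if s0 ∈ E then (1:ℝ) else 0)
        ≤ (dist (p.v i) (p.v (i + 1)) - if p.seg i ∈ E then (1:ℝ) else 0) +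
          (dist (p.v (i + 1)) (p.v (i + 1 + 1)) - if p.seg (i + 1) ∈ E then (1:ℝ) else 0) := by
      rw [if_neg h1, if_neg h2, hv12]
      have htri := dist_triangle (p.v i) (p.v (i + 1)) (p.v (i + 2))
      by_cases hE0 : s0 ∈ E
      · rw [if_pos hE0]; linarith
      · rw [if_neg hE0]; linarith
    linarith

lemma smooth_lemma {X : Type*} [MetricSpace X]
    (hgeo : ∀ a b : X, ∃ s : Set X, GeodSeg s a b) (E : Set (Set X)) :
    ∀ (n : ℕ) {a b : X} (p : PGPath X a b), p.k ≤ n →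
      ∃ q : PGPath X a b, Admissible E q ∧ mlen E q ≤ mlen E p := by
  intro n
  induction n with
  | zero =>
    intro a b p hp
    exact ⟨p, fun i hi => absurd hi (by omega), le_refl _⟩
  | succ n ih =>
    intro a b p hp
    by_cases hadm : Admissible E p
    · exact ⟨p, hadm, le_refl _⟩
    · rw [Admissible] at hadm
      push_neg at hadm
      obtain ⟨i, hi, h1, h2⟩ := hadm
      obtain ⟨p', hk', hle⟩ := merge_lemma hgeo E p i hi h1 h2
      obtain ⟨q, hq, hqle⟩ := ih p' (by omega)
      exact ⟨q, hq, le_trans hqle hle⟩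

noncomputable def singlePath {X : Type*} [MetricSpace X]
    (hgeo : ∀ a b : X, ∃ s : Set X, GeodSeg s a b) (a b : X) : PGPath X a b where
  k := 1
  v := fun j => if j = 0 then a else b
  seg := fun _ => (hgeo a b).choose
  hv0 := by simp
  hvk := by simp
  hseg := by
    intro i hi
    interval_cases i
    simpa using (hgeo a b).choose_spec

lemma singlePath_adm {X : Type*} [MetricSpace X]
    (hgeo : ∀ a b : X, ∃ s : Set X, GeodSeg s a b) (E : Set (Set X)) (a b : X) :
    Admissible E (singlePath hgeo a b) :=
  fun i hi => absurd hi (by simp [singlePath])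

lemma singlePath_mlen {X : Type*} [MetricSpace X]
    (hgeo : ∀ a b : X, ∃ s : Set X, GeodSeg s a b) (E : Set (Set X)) (a b : X) :
    mlen E (singlePath hgeo a b) ≤ dist a b := by
  rw [mlen]
  have h1 : ∑ i ∈ Finset.range (singlePath hgeo a b).k,
      dist ((singlePath hgeo a b).v i) ((singlePath hgeo a b).v (i + 1)) = dist a b := by
    simp [singlePath]
  rw [h1]
  have : (0:ℝ) ≤ (((Finset.range (singlePath hgeo a b).k).filter
      (fun i => (singlePath hgeo a b).seg i ∈ E)).card : ℝ) := by positivity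
  linarith

noncomputable def concatPath {X : Type*} [MetricSpace X] {a b c : X}
    (p : PGPath X a b) (q : PGPath X b c) : PGPath X a c where
  k := p.k + q.k
  v := fun j => if j < p.k then p.v j else q.v (j - p.k)
  seg := fun j => if j < p.k then p.seg j else q.seg (j - p.k)
  hv0 := by
    by_cases h : 0 < p.k
    · simp [h, p.hv0]
    · have hk0 : p.k = 0 := by omega
      have : q.v 0 = b := q.hv0
      simp only [if_neg (by omega : ¬ (0 < p.k))]
      rw [Nat.zero_sub, q.hv0, ← p.hvk, hk0, p.hv0]
  hvk := by
    have h : ¬ (p.k + q.k < p.k) := by omega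
    simp only [if_neg h, Nat.add_sub_cancel_left, q.hvk]
  hseg := by
    intro j hj
    have hv_eq : ∀ i ≤ p.k, (if i < p.k then p.v i else q.v (i - p.k)) = p.v i := by
      intro i hip
      by_cases h : i < p.k
      · rw [if_pos h]
      · have : i = p.k := by omega
        subst this
        rw [if_neg h, Nat.sub_self, q.hv0, p.hvk]
    by_cases h : j < p.k
    · simp only [if_pos h, hv_eq j h.le, hv_eq (j + 1) h]
      exact p.hseg j h
    · have h1 : ¬ (j + 1 < p.k) := by omega
      simp only [if_neg h, if_neg h1]
      have h2 : j + 1 - p.k = (j - p.k) + 1 := by omega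
      rw [h2]
      exact q.hseg (j - p.k) (by omega)

lemma concat_mlen {X : Type*} [MetricSpace X] {a b c : X} (E : Set (Set X))
    (p : PGPath X a b) (q : PGPath X b c) :
    mlen E (concatPath p q) = mlen E p + mlen E q := by
  rw [mlen_eq_sum, mlen_eq_sum, mlen_eq_sum]
  show (∑ j ∈ Finset.range (p.k + q.k), _) = _
  rw [Finset.sum_range_add]
  congr 1
  · apply Finset.sum_congr rfl
    intro j hj
    have hjp := Finset.mem_range.1 hj
    have hv_eq : ∀ i ≤ p.k, (concatPath p q).v i = p.v i := by
      intro i hip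
      by_cases h : i < p.k
      · show (if i < p.k then p.v i else q.v (i - p.k)) = p.v i
        rw [if_pos h]
      · have : i = p.k := by omega
        subst this
        show (if p.k < p.k then p.v p.k else q.v (p.k - p.k)) = p.v p.k
        rw [if_neg (lt_irrefl _), Nat.sub_self, q.hv0, p.hvk]
    rw [hv_eq j hjp.le, hv_eq (j + 1) hjp]
    have hseg_eq : (concatPath p q).seg j = p.seg j := by
      show (if j < p.k then p.seg j else q.seg (j - p.k)) = p.seg j
      rw [if_pos hjp]
    rw [hseg_eq]
  · apply Finset.sum_congr rfl
    intro t _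
    have h1 : ¬ (p.k + t < p.k) := by omega
    have h2 : ¬ (p.k + t + 1 < p.k) := by omega
    have hv1 : (concatPath p q).v (p.k + t) = q.v t := by
      show (if p.k + t < p.k then p.v (p.k + t) else q.v (p.k + t - p.k)) = q.v t
      rw [if_neg h1, Nat.add_sub_cancel_left]
    have hv2 : (concatPath p q).v (p.k + t + 1) = q.v (t + 1) := by
      show (if p.k + t + 1 < p.k then _ else q.v (p.k + t + 1 - p.k)) = q.v (t + 1)
      rw [if_neg h2]
      congr 1
      omega
    have hs : (concatPath p q).seg (p.k + t) = q.seg t := by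
      show (if p.k + t < p.k then p.seg (p.k + t) else q.seg (p.k + t - p.k)) = q.seg t
      rw [if_neg h1, Nat.add_sub_cancel_left]
    rw [hv1, hv2, hs]

theorem stmt17 {X : Type*} [MetricSpace X]
    (hgeo : ∀ a b : X, ∃ s : Set X, GeodSeg s a b)
    (E : Set (Set X)) (L : ℝ) (hL : 1 ≤ L)
    (hE : ∀ s ∈ E, ∃ u v : X, GeodSeg s u v ∧ dist u v = L) :
    (∀ (a b : X) (p : PGPath X a b) (i : ℕ), i + 1 < p.k →
      p.seg i ∉ E → p.seg (i + 1) ∉ E →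
      ∃ p' : PGPath X a b, p'.k + 1 = p.k ∧ mlen E p' ≤ mlen E p) ∧
    (∀ a b : X, lam E a b = sInf {m : ℝ | ∃ p : PGPath X a b, mlen E p = m}) ∧
    (∀ a b : X, lam E a b ≤ dist a b) ∧
    (∀ a b c : X, lam E a c ≤ lam E a b + lam E b c) ∧
    (∀ a b a' b' : X, |lam E a b - lam E a' b'| ≤ dist a a' + dist b b') := by
  have hbdd_adm : ∀ a b : X,
      BddBelow {m : ℝ | ∃ p : PGPath X a b, Admissible E p ∧ mlen E p = m} := by
    rintro a b
    exact ⟨0, by rintro m ⟨p, -, rfl⟩; exact mlen_nonneg hL hE p⟩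
  have hbdd_all : ∀ a b : X, BddBelow {m : ℝ | ∃ p : PGPath X a b, mlen E p = m} := by
    rintro a b
    exact ⟨0, by rintro m ⟨p, rfl⟩; exact mlen_nonneg hL hE p⟩
  have hne_adm : ∀ a b : X,
      ({m : ℝ | ∃ p : PGPath X a b, Admissible E p ∧ mlen E p = m}).Nonempty :=
    fun a b => ⟨_, singlePath hgeo a b, singlePath_adm hgeo E a b, rfl⟩
  have hne_all : ∀ a b : X, ({m : ℝ | ∃ p : PGPath X a b, mlen E p = m}).Nonempty :=
    fun a b => ⟨_, singlePath hgeo a b, rfl⟩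
  have part1 : ∀ (a b : X) (p : PGPath X a b) (i : ℕ), i + 1 < p.k →
      p.seg i ∉ E → p.seg (i + 1) ∉ E →
      ∃ p' : PGPath X a b, p'.k + 1 = p.k ∧ mlen E p' ≤ mlen E p :=
    fun a b p i hi h1 h2 => merge_lemma hgeo E p i hi h1 h2
  have part2 : ∀ a b : X,
      lam E a b = sInf {m : ℝ | ∃ p : PGPath X a b, mlen E p = m} := by
    intro a b
    rw [lam]
    apply le_antisymm
    · apply le_csInf (hne_all a b)
      rintro m ⟨p, rfl⟩
      obtain ⟨q, hq, hle⟩ := smooth_lemma hgeo E p.k p le_rfl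
      exact le_trans (csInf_le (hbdd_adm a b) ⟨q, hq, rfl⟩) hle
    · apply le_csInf (hne_adm a b)
      rintro m ⟨p, -, rfl⟩
      exact csInf_le (hbdd_all a b) ⟨p, rfl⟩
  have part3 : ∀ a b : X, lam E a b ≤ dist a b := by
    intro a b
    rw [lam]
    exact le_trans
      (csInf_le (hbdd_adm a b) ⟨singlePath hgeo a b, singlePath_adm hgeo E a b, rfl⟩)
      (singlePath_mlen hgeo E a b)
  have part4 : ∀ a b c : X, lam E a c ≤ lam E a b + lam E b c := by
    intro a b c
    have step : ∀ x ∈ {m : ℝ | ∃ p : PGPath X a b, Admissible E p ∧ mlen E p = m},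
        ∀ y ∈ {m : ℝ | ∃ p : PGPath X b c, Admissible E p ∧ mlen E p = m},
        lam E a c ≤ x + y := by
      rintro x ⟨p, -, rfl⟩ y ⟨q, -, rfl⟩
      rw [part2 a c]
      exact csInf_le (hbdd_all a c) ⟨concatPath p q, concat_mlen E p q⟩
    have step2 : ∀ x ∈ {m : ℝ | ∃ p : PGPath X a b, Admissible E p ∧ mlen E p = m},
        lam E a c - x ≤ lam E b c := by
      intro x hx
      have hb : lam E b c
          = sInf {m : ℝ | ∃ p : PGPath X b c, Admissible E p ∧ mlen E p = m} := rfl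
      rw [hb]
      apply le_csInf (hne_adm b c)
      intro y hy
      have := step x hx y hy
      linarith
    have step3 : lam E a c - lam E b c ≤ lam E a b := by
      have ha : lam E a b
          = sInf {m : ℝ | ∃ p : PGPath X a b, Admissible E p ∧ mlen E p = m} := rfl
      rw [ha]
      apply le_csInf (hne_adm a b)
      intro x hx
      have := step2 x hx
      linarith
    linarith
  refine ⟨part1, part2, part3, part4, ?_⟩
  intro a b a' b'
  have h1 : lam E a b ≤ dist a a' + lam E a' b' + dist b b' := by
    have t1 := part4 a a' b
    have t2 := part4 a' b' b
    have t3 := part3 a a'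
    have t4 := part3 b' b
    rw [dist_comm b' b] at t4
    linarith
  have h2 : lam E a' b' ≤ dist a a' + lam E a b + dist b b' := by
    have t1 := part4 a' a b'
    have t2 := part4 a b b'
    have t3 := part3 a' a
    have t4 := part3 b b'
    rw [dist_comm a' a] at t3
    linarith
  rw [abs_le]
  constructor <;> linarith
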